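/- Let f : [a, b] → ℝ be continuous on [a, b] and specularly differentiable on (a, b). Then f^♮(x) ≥ 0 for all x ∈ (a, b) if and only if f is monotonically increasing on [a, b]. -/

import Mathlib

open Set

noncomputable def A (α β : ℝ) : ℝ :=
  (α * β - 1 + Real.sqrt ((α ^ 2 + 1) * (β ^ 2 + 1))) / (α + β)

/-- `f` is specularly differentiable at `x`: both one-sided derivatives exist. -/
def SpecularDifferentiableAt (f : ℝ → ℝ) (x : ℝ) : Prop :=
  DifferentiableWithinAt ℝ f (Ici x) x ∧ DifferentiableWithinAt ℝ f (Iic x) x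

/-- The specular derivative of `f` at `x`, in terms of the right-hand derivative
`α = f'₊(x)` and the left-hand derivative `β = f'₋(x)`. -/
noncomputable def specDeriv (f : ℝ → ℝ) (x : ℝ) : ℝ :=
  let α := derivWithin f (Ici x) x
  let β := derivWithin f (Iic x) x
  if α + β = 0 then 0 else A α β

lemma A_num_pos {α β : ℝ} (h : α + β ≠ 0) :
    0 < α * β - 1 + Real.sqrt ((α ^ 2 + 1) * (β ^ 2 + 1)) := by
  have hnn : (0:ℝ) ≤ (α ^ 2 + 1) * (β ^ 2 + 1) := by positivity
  have hs := Real.sq_sqrt hnn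
  have hs0 := Real.sqrt_nonneg ((α ^ 2 + 1) * (β ^ 2 + 1))
  have hp : 0 < (α + β) ^ 2 := by positivity
  set s := Real.sqrt ((α ^ 2 + 1) * (β ^ 2 + 1))
  nlinarith [sq_nonneg (s + (1 - α * β)), sq_nonneg (s - (1 - α * β))]

lemma specDeriv_nonneg_iff (f : ℝ → ℝ) (x : ℝ) :
    0 ≤ specDeriv f x ↔ 0 ≤ derivWithin f (Ici x) x + derivWithin f (Iic x) x := by
  set α := derivWithin f (Ici x) x
  set β := derivWithin f (Iic x) x
  have : specDeriv f x = if α + β = 0 then 0 else A α β := rfl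
  rw [this]
  by_cases h : α + β = 0
  · simp [h]
  · rw [if_neg h]
    unfold A
    rw [div_nonneg_iff]
    constructor
    · rintro (⟨h1, h2⟩ | ⟨h1, h2⟩)
      · exact h2
      · exact absurd h1 (not_le.mpr (A_num_pos h))
    · intro hs
      exact Or.inl ⟨(A_num_pos h).le, hs⟩

lemma countable_slm (f : ℝ → ℝ) :
    {x : ℝ | ∃ p q : ℚ, (p:ℝ) < x ∧ x < q ∧ ∀ t ∈ Ioo (p:ℝ) (q:ℝ), t ≠ x → f t < f x}.Countable := by
  have hsub : {x : ℝ | ∃ p q : ℚ, (p:ℝ) < x ∧ x < q ∧ ∀ t ∈ Ioo (p:ℝ) (q:ℝ), t ≠ x → f t < f x} ⊆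
      ⋃ (p : ℚ) (q : ℚ), {x : ℝ | (p:ℝ) < x ∧ x < q ∧ ∀ t ∈ Ioo (p:ℝ) (q:ℝ), t ≠ x → f t < f x} := by
    rintro x ⟨p, q, h1, h2, h3⟩
    exact mem_iUnion.2 ⟨p, mem_iUnion.2 ⟨q, h1, h2, h3⟩⟩
  refine Set.Countable.mono hsub ?_
  refine countable_iUnion fun p => countable_iUnion fun q => ?_
  apply Set.Subsingleton.countable
  rintro x ⟨hpx, hxq, hx⟩ y ⟨hpy, hyq, hy⟩
  by_contra hne
  have h1 : f y < f x := hx y ⟨hpy, hyq⟩ (Ne.symm hne)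
  have h2 : f x < f y := hy x ⟨hpx, hxq⟩ hne
  linarith

lemma mem_slm {f : ℝ → ℝ} {x : ℝ}
    (hdr : DifferentiableWithinAt ℝ f (Ici x) x)
    (hdl : DifferentiableWithinAt ℝ f (Iic x) x)
    (hr : derivWithin f (Ici x) x < 0) (hl : 0 < derivWithin f (Iic x) x) :
    ∃ p q : ℚ, (p:ℝ) < x ∧ x < q ∧ ∀ t ∈ Ioo (p:ℝ) (q:ℝ), t ≠ x → f t < f x := by
  have h1 := hdr.hasDerivWithinAt
  rw [hasDerivWithinAt_iff_tendsto_slope, Ici_sdiff_left] at h1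
  have h2 := hdl.hasDerivWithinAt
  rw [hasDerivWithinAt_iff_tendsto_slope, Iic_sdiff_right] at h2
  have e1 : ∀ᶠ t in nhdsWithin x (Ioi x), slope f x t < 0 := h1.eventually_lt_const hr
  have e2 : ∀ᶠ t in nhdsWithin x (Iio x), 0 < slope f x t := h2.eventually_const_lt hl
  rw [Filter.eventually_iff, mem_nhdsGT_iff_exists_Ioo_subset] at e1
  rw [Filter.eventually_iff, mem_nhdsLT_iff_exists_Ioo_subset] at e2
  obtain ⟨u, hu, hu2⟩ := e1
  obtain ⟨l, hlx, hl2⟩ := e2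
  obtain ⟨p, hp1, hp2⟩ := exists_rat_btwn (show l < x from hlx)
  obtain ⟨q, hq1, hq2⟩ := exists_rat_btwn (show x < u from hu)
  refine ⟨p, q, hp2, hq1, fun t ht htne => ?_⟩
  rcases lt_or_gt_of_ne htne with hlt | hgt
  · have : 0 < slope f x t := hl2 ⟨lt_of_le_of_lt hp1.le ht.1, hlt⟩
    rw [slope_def_field] at this
    have hd : t - x < 0 := by linarith
    rcases div_pos_iff.mp this with ⟨h1', h2'⟩ | ⟨h1', _⟩
    · linarith
    · linarith
  · have : slope f x t < 0 := hu2 ⟨hgt, lt_trans ht.2 hq2⟩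
    rw [slope_def_field] at this
    have hd : 0 < t - x := by linarith
    rcases div_neg_iff.mp this with ⟨_, h2'⟩ | ⟨h1', _⟩
    · linarith
    · linarith

theorem specDeriv_nonneg_iff_monotoneOn (f : ℝ → ℝ) (a b : ℝ) (hab : a < b)
    (hcont : ContinuousOn f (Icc a b))
    (hdiff : ∀ x ∈ Ioo a b, SpecularDifferentiableAt f x) :
    (∀ x ∈ Ioo a b, 0 ≤ specDeriv f x) ↔ MonotoneOn f (Icc a b) := by
  constructor
  · intro hspec
    have hsum : ∀ x ∈ Ioo a b, 0 ≤ derivWithin f (Ici x) x + derivWithin f (Iic x) x :=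
      fun x hx => (specDeriv_nonneg_iff f x).mp (hspec x hx)
    set D : Set ℝ := {x | x ∈ Ioo a b ∧ derivWithin f (Ici x) x < 0} with hDdef
    have hD : D.Countable := by
      refine (countable_slm f).mono ?_
      rintro x ⟨hx, hr⟩
      exact mem_slm (hdiff x hx).1 (hdiff x hx).2 hr (by have := hsum x hx; linarith)
    intro u hu w hw huw
    by_contra hlt'
    have hlt : f w < f u := not_le.mp hlt'
    have huw' : u < w := lt_of_le_of_ne huw (by rintro rfl; exact hlt' le_rfl)
    -- find x' ∈ Ioo u w with f w < f x'
    have hIoo_sub : Ioo u w ⊆ Icc a b := fun t ht => ⟨le_trans hu.1 ht.1.le, le_trans ht.2.le hw.2⟩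
    have hne : (nhdsWithin u (Ioo u w)).NeBot := by
      rw [nhdsWithin_Ioo_eq_nhdsGT huw']
      exact nhdsGT_neBot u
    have hev : ∀ᶠ t in nhdsWithin u (Ioo u w), f w < f t := by
      have h1 : ∀ᶠ t in nhdsWithin u (Icc a b), f w < f t :=
        (hcont u hu).eventually_const_lt hlt
      exact h1.filter_mono (nhdsWithin_mono u hIoo_sub)
    obtain ⟨x', hx', hx'mem⟩ := (hev.and eventually_mem_nhdsWithin).exists
    -- perturbation
    set ε : ℝ := (f x' - f w) / (2 * (w - x')) with hεdef
    have hwx' : x' < w := hx'mem.2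
    have hε : 0 < ε := by
      apply div_pos (by linarith) (by linarith)
    set g : ℝ → ℝ := fun t => f t + ε * t with hgdef
    have hgc : ContinuousOn g (Icc a b) :=
      hcont.add ((continuous_const.mul continuous_id).continuousOn)
    have hgxw : g w < g x' := by
      have hne2 : w - x' ≠ 0 := by linarith
      have hεw : ε * (w - x') = (f x' - f w) / 2 := by
        rw [hεdef]; field_simp
      simp only [hgdef]
      nlinarith [hεw]
    -- pick a level v not in g '' D
    have hns : ¬ (Ioo (g w) (g x') ⊆ g '' D) := by
      intro hsub
      have h0 : MeasureTheory.volume (g '' D) = 0 := (hD.image g).measure_zero _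
      have h1 := MeasureTheory.measure_mono (μ := MeasureTheory.volume) hsub
      rw [h0, Real.volume_Ioo] at h1
      exact absurd (le_antisymm h1 zero_le)
        (ne_of_gt (ENNReal.ofReal_pos.mpr (by linarith)))
    obtain ⟨v, hv, hvD⟩ := not_subset.mp hns
    -- the level point c
    set S : Set ℝ := Icc x' w ∩ g ⁻¹' (Ici v) with hSdef
    have hx'S : x' ∈ S := ⟨⟨le_rfl, hwx'.le⟩, le_of_lt hv.2⟩
    have hSbdd : BddAbove S := BddAbove.mono (fun t ht => ht.1) bddAbove_Icc
    have hIccsub : Icc x' w ⊆ Icc a b :=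
      Icc_subset_Icc (le_trans hu.1 hx'mem.1.le) hw.2
    have hSclosed : IsClosed S :=
      (hgc.mono hIccsub).preimage_isClosed_of_isClosed isClosed_Icc isClosed_Ici
    set c : ℝ := sSup S with hcdef
    have hcS : c ∈ S := hSclosed.csSup_mem ⟨x', hx'S⟩ hSbdd
    have hcw : c < w := by
      rcases lt_or_eq_of_le hcS.1.2 with h | h
      · exact h
      · exfalso; have := hcS.2; rw [h] at this; exact absurd hv.1 (not_lt.mpr this)
    have hcab : c ∈ Ioo a b :=
      ⟨lt_of_lt_of_le (lt_of_le_of_lt hu.1 hx'mem.1) hcS.1.1, lt_of_lt_of_le hcw hw.2⟩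
    have hright : ∀ t, c < t → t ≤ w → g t < v := by
      intro t h1 h2
      by_contra h
      have htS : t ∈ S := ⟨⟨le_trans hcS.1.1 h1.le, h2⟩, not_lt.mp h⟩
      exact absurd (le_csSup hSbdd htS) (not_le.mpr h1)
    -- right derivative of g at c is ≤ 0
    have hgd : HasDerivWithinAt g (derivWithin f (Ici c) c + ε * 1) (Ici c) c :=
      ((hdiff c hcab).1.hasDerivWithinAt).add ((hasDerivWithinAt_id c (Ici c)).const_mul ε)
    have hDc : derivWithin f (Ici c) c + ε * 1 ≤ 0 := by
      rw [hasDerivWithinAt_iff_tendsto_slope, Ici_sdiff_left] at hgd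
      refine le_of_tendsto hgd ?_
      filter_upwards [Ioo_mem_nhdsGT_of_mem (⟨le_refl c, hcw⟩ : c ∈ Ico c w)] with t ht
      rw [slope_def_field]
      have h1 : g t < v := hright t ht.1 ht.2.le
      have h2 : v ≤ g c := hcS.2
      apply div_nonpos_of_nonpos_of_nonneg <;> linarith [ht.1]
    have hcD : c ∈ D := ⟨hcab, by nlinarith⟩
    -- g c = v
    have hgcv : g c = v := by
      refine le_antisymm ?_ hcS.2
      have hnb : (nhdsWithin c (Ioo c w)).NeBot := by
        rw [nhdsWithin_Ioo_eq_nhdsGT hcw]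
        exact nhdsGT_neBot c
      have hIoocw : Ioo c w ⊆ Icc a b := fun t ht =>
        ⟨le_trans hcab.1.le ht.1.le, le_trans ht.2.le hw.2⟩
      have htd : Filter.Tendsto g (nhdsWithin c (Ioo c w)) (nhds (g c)) :=
        (hgc c ⟨hcab.1.le, hcab.2.le⟩).mono_left (nhdsWithin_mono c hIoocw)
      refine le_of_tendsto htd ?_
      filter_upwards [eventually_mem_nhdsWithin] with t ht
      exact (hright t ht.1 ht.2.le).le
    exact hvD ⟨c, hcD, hgcv⟩
  · intro hmono x hx
    rw [specDeriv_nonneg_iff]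
    have hxm : x ∈ Icc a b := ⟨hx.1.le, hx.2.le⟩
    have hα : 0 ≤ derivWithin f (Ici x) x := by
      have h := (hdiff x hx).1.hasDerivWithinAt
      rw [hasDerivWithinAt_iff_tendsto_slope, Ici_sdiff_left] at h
      refine ge_of_tendsto h ?_
      filter_upwards [Ioo_mem_nhdsGT_of_mem (⟨le_refl x, hx.2⟩ : x ∈ Ico x b)] with t ht
      rw [slope_def_field]
      have : f x ≤ f t := hmono hxm ⟨le_trans hx.1.le ht.1.le, ht.2.le⟩ ht.1.le
      apply div_nonneg <;> linarith [ht.1]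
    have hβ : 0 ≤ derivWithin f (Iic x) x := by
      have h := (hdiff x hx).2.hasDerivWithinAt
      rw [hasDerivWithinAt_iff_tendsto_slope, Iic_sdiff_right] at h
      refine ge_of_tendsto h ?_
      filter_upwards [Ioo_mem_nhdsLT_of_mem (⟨hx.1, le_refl x⟩ : x ∈ Ioc a x)] with t ht
      rw [slope_def_field]
      have : f t ≤ f x := hmono ⟨ht.1.le, le_trans ht.2.le hx.2.le⟩ hxm ht.2.le
      exact div_nonneg_iff.mpr (Or.inr ⟨by linarith [ht.2], by linarith [ht.2]⟩)
    linarith
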